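/- Let M = Σ_y M(y) be irreducible and suppose some rank-one nonnegative matrix R = u v (u a nonnegative nonzero column vector, v a probability row vector) is a limit of positively rescaled words M(y_1)⋯M(y_n). Then for every α ∈ Δ there exists a word z with α M(z) u > 0; consequently α M(z) R is a positive scalar multiple of v. -/

import Mathlib

open Matrix Filter

private lemma word_prod_nonneg {s : ℕ} {Y : Type*} (M : Y → Matrix (Fin s) (Fin s) ℝ)
    (hpos : ∀ y i j, 0 ≤ M y i j) :
    ∀ z : List Y, ∀ i j, 0 ≤ ((z.map M).prod) i j := by
  intro z
  induction z with
  | nil => intro i j; simp [Matrix.one_apply]; positivity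
  | cons y z ih =>
    intro i j
    simp only [List.map_cons, List.prod_cons, Matrix.mul_apply]
    exact Finset.sum_nonneg fun l _ => mul_nonneg (hpos y i l) (ih l j)

private lemma exists_word {s : ℕ} {Y : Type*} [Fintype Y] (M : Y → Matrix (Fin s) (Fin s) ℝ)
    (hpos : ∀ y i j, 0 ≤ M y i j) (Mtot : Matrix (Fin s) (Fin s) ℝ) (hMtot : Mtot = ∑ y, M y) :
    ∀ k : ℕ, ∀ i j, 0 < (Mtot ^ k) i j → ∃ z : List Y, 0 < ((z.map M).prod) i j := by
  intro k
  induction k with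
  | zero =>
    intro i j h
    refine ⟨[], ?_⟩
    simpa using h
  | succ k ih =>
    intro i j h
    rw [pow_succ, Matrix.mul_apply] at h
    have h1 : ∃ l, 0 < (Mtot ^ k) i l * Mtot l j := by
      by_contra hc
      push_neg at hc
      exact absurd (Finset.sum_nonpos fun l _ => hc l) (not_le.mpr h)
    obtain ⟨l, hl⟩ := h1
    have hMnn : 0 ≤ Mtot l j := by
      rw [hMtot]
      simp only [Matrix.sum_apply]
      exact Finset.sum_nonneg fun y _ => hpos y l j
    have hB : 0 < Mtot l j := by
      rcases hMnn.lt_or_eq with h' | h'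
      · exact h'
      · rw [← h', mul_zero] at hl; exact absurd hl (lt_irrefl 0)
    have hA : 0 < (Mtot ^ k) i l := by
      by_contra hc
      push_neg at hc
      nlinarith
    obtain ⟨z, hz⟩ := ih i l hA
    rw [hMtot, Matrix.sum_apply] at hB
    have h2 : ∃ y, 0 < M y l j := by
      by_contra hc
      push_neg at hc
      exact absurd (Finset.sum_nonpos fun y _ => hc y) (not_le.mpr hB)
    obtain ⟨y, hy⟩ := h2
    refine ⟨z ++ [y], ?_⟩
    rw [List.map_append, List.prod_append]
    simp only [List.map_cons, List.map_nil, List.prod_cons, List.prod_nil, mul_one,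
      Matrix.mul_apply]
    have : 0 < ((z.map M).prod) i l * M y l j := mul_pos hz hy
    refine lt_of_lt_of_le this (Finset.single_le_sum (f := fun l' => ((z.map M).prod) i l' * M y l' j)
      (fun l' _ => mul_nonneg (word_prod_nonneg M hpos z i l') (hpos y l' j)) (Finset.mem_univ l))

/-- If `M` is irreducible and `R = u v` (with `u ≥ 0` nonzero, `v` a probability vector) is a
limit of positively rescaled words `M(y₁)⋯M(yₙ)`, then for every `α ∈ Δ` there is a word `z`
with `α M(z) u > 0`; consequently `α M(z) R` is a positive multiple of `v`. -/
theorem stmt8 (s : ℕ) (Y : Type*) [Fintype Y]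
    (M : Y → Matrix (Fin s) (Fin s) ℝ)
    (hpos : ∀ y i j, 0 ≤ M y i j)
    (Mtot : Matrix (Fin s) (Fin s) ℝ) (hMtot : Mtot = ∑ y, M y)
    (hstoch : ∀ i, ∑ j, Mtot i j = 1)
    (hirr : ∀ i j, ∃ k, 0 < k ∧ 0 < (Mtot ^ k) i j)
    (u : Fin s → ℝ) (hu : ∀ i, 0 ≤ u i) (hune : u ≠ 0)
    (v : Fin s → ℝ) (hv : v ∈ stdSimplex ℝ (Fin s))
    (R : Matrix (Fin s) (Fin s) ℝ) (hR : R = Matrix.of fun i j => u i * v j)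
    (hlim : ∃ (c : ℕ → ℝ) (w : ℕ → List Y),
      (∀ n, 0 < c n) ∧ (∀ n, w n ≠ []) ∧
      Tendsto (fun n => c n • ((w n).map M).prod) atTop (nhds R)) :
    ∀ α ∈ stdSimplex ℝ (Fin s), ∃ z : List Y,
      0 < (α ᵥ* ((z.map M).prod)) ⬝ᵥ u ∧
      ∃ t : ℝ, 0 < t ∧ α ᵥ* ((z.map M).prod * R) = t • v := by
  intro α hα
  obtain ⟨hα0, hα1⟩ := hα
  -- find i0 with α i0 > 0
  have hi0 : ∃ i0, 0 < α i0 := by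
    by_contra hc
    push_neg at hc
    have : ∑ i, α i ≤ 0 := Finset.sum_nonpos fun i _ => hc i
    rw [hα1] at this; linarith
  obtain ⟨i0, hi0⟩ := hi0
  -- find j0 with u j0 > 0
  have hj0 : ∃ j0, 0 < u j0 := by
    by_contra hc
    push_neg at hc
    exact hune (funext fun j => le_antisymm (hc j) (hu j))
  obtain ⟨j0, hj0⟩ := hj0
  obtain ⟨k, _, hk⟩ := hirr i0 j0
  obtain ⟨z, hz⟩ := exists_word M hpos Mtot hMtot k i0 j0 hk
  set P := (z.map M).prod with hP
  have hPnn := word_prod_nonneg M hpos z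
  have hvm : ∀ j, (α ᵥ* P) j = ∑ i, α i * P i j := fun j => by
    simp [Matrix.vecMul, dotProduct]
  have key : 0 < (α ᵥ* P) ⬝ᵥ u := by
    rw [dotProduct]
    simp only [hvm]
    have hterm : ∀ j, 0 ≤ (∑ i, α i * P i j) * u j := fun j =>
      mul_nonneg (Finset.sum_nonneg fun i _ => mul_nonneg (hα0 i) (hPnn i j)) (hu j)
    have hj0' : 0 < (∑ i, α i * P i j0) * u j0 := by
      apply mul_pos _ hj0
      refine lt_of_lt_of_le (mul_pos hi0 hz)
        (Finset.single_le_sum (f := fun i => α i * P i j0)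
          (fun i _ => mul_nonneg (hα0 i) (hPnn i j0)) (Finset.mem_univ i0))
    exact lt_of_lt_of_le hj0' (Finset.single_le_sum (f := fun j => (∑ i, α i * P i j) * u j)
      (fun j _ => hterm j) (Finset.mem_univ j0))
  refine ⟨z, key, (α ᵥ* P) ⬝ᵥ u, key, ?_⟩
  funext j
  rw [← Matrix.vecMul_vecMul]
  simp only [hR, Matrix.vecMul, dotProduct, Matrix.of_apply, Pi.smul_apply, smul_eq_mul]
  rw [Finset.sum_mul]
  congr 1
  ext i
  ring
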